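/- arXiv:cmp-lg/9807005 — 2 statements merged into one kernel-verified Lean document; each statement's English description precedes it below -/
import Mathlib

section
/- Let G = (N, Σ, P, S) be a context-free grammar, let p = (A → α₁Bα₂) be a production in P with A, B ∈ N and B ≠ A, and let B → β₁, B → β₂, …, B → βₙ be the complete list of productions of P whose left-hand side is B. Let G' = (N, Σ, P', S) be obtained from G by deleting the production p from P and adding instead the productions A → α₁β₁α₂, A → α₁β₂α₂, …, A → α₁βₙα₂. Then L(G') = L(G). -/
namespace CfgSubstAux

open ContextFreeGrammar

variable {T : Type} 

/-- Length-indexed derivation. -/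
inductive DerivesIn (g : ContextFreeGrammar T) :
    List (Symbol T g.NT) → List (Symbol T g.NT) → ℕ → Prop
  | refl (w : List (Symbol T g.NT)) : DerivesIn g w w 0
  | head {u v w : List (Symbol T g.NT)} {n : ℕ} :
      g.Produces u v → DerivesIn g v w n → DerivesIn g u w (n + 1)

variable {g : ContextFreeGrammar T}

lemma DerivesIn.toDerives {u v : List (Symbol T g.NT)} {n : ℕ}
    (h : DerivesIn g u v n) : g.Derives u v := by
  induction h with
  | refl => rfl
  | head hp _ ih => exact hp.trans_derives ih

lemma derives_iff_derivesIn {u v : List (Symbol T g.NT)} :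
    g.Derives u v ↔ ∃ n, DerivesIn g u v n := by
  constructor
  · intro h
    induction h using Relation.ReflTransGen.head_induction_on with
    | refl => exact ⟨0, DerivesIn.refl v⟩
    | head hp _ ih => obtain ⟨n, hn⟩ := ih; exact ⟨n + 1, DerivesIn.head hp hn⟩
  · rintro ⟨n, hn⟩; exact hn.toDerives

lemma not_rewrites_terminal {r : ContextFreeRule T g.NT} {w : List T}
    {v : List (Symbol T g.NT)} (h : r.Rewrites (w.map Symbol.terminal) v) : False := by
  obtain ⟨p, q, hpq, -⟩ := h.exists_parts
  have : Symbol.nonterminal r.input ∈ List.map Symbol.terminal w := by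
    rw [hpq]; simp
  simp only [List.mem_map] at this
  obtain ⟨t, -, ht⟩ := this
  cases ht

lemma DerivesIn.zero_inv {u v : List (Symbol T g.NT)} (h : DerivesIn g u v 0) : u = v := by
  cases h; rfl

lemma DerivesIn.succ_inv {u v : List (Symbol T g.NT)} {n : ℕ} (h : DerivesIn g u v (n + 1)) :
    ∃ t, g.Produces u t ∧ DerivesIn g t v n := by
  cases h with
  | head hp hd => exact ⟨_, hp, hd⟩

lemma append_singleton_cases {α : Type*} {x y p q : List α} {s : α}
    (h : x ++ y = p ++ s :: q) :
    (∃ q', x = p ++ s :: q' ∧ q = q' ++ y) ∨ (∃ p', p = x ++ p' ∧ y = p' ++ s :: q) := by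
  rcases List.append_eq_append_iff.mp h with ⟨a, ha₁, ha₂⟩ | ⟨c, hc₁, hc₂⟩
  · exact Or.inr ⟨a, ha₁, ha₂⟩
  · cases c with
    | nil =>
      right
      refine ⟨[], by simpa using hc₁.symm, by simpa using hc₂.symm⟩
    | cons d c' =>
      left
      obtain ⟨rfl, hc₂'⟩ : d = s ∧ c' ++ y = q := by
        have := hc₂.symm
        simp only [List.cons_append] at this
        exact ⟨(List.cons.injEq _ _ _ _ ▸ this).1, (List.cons.injEq _ _ _ _ ▸ this).2⟩
      exact ⟨c', by rw [hc₁], hc₂'.symm⟩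

/-- Splitting a derivation to a terminal word. -/
lemma DerivesIn.split {x y : List (Symbol T g.NT)} {w : List T} {n : ℕ}
    (h : DerivesIn g (x ++ y) (w.map Symbol.terminal) n) :
    ∃ w₁ w₂ n₁ n₂, w = w₁ ++ w₂ ∧ n₁ + n₂ = n ∧
      DerivesIn g x (w₁.map Symbol.terminal) n₁ ∧ DerivesIn g y (w₂.map Symbol.terminal) n₂ := by
  induction n generalizing x y w with
  | zero =>
    have hxy : x ++ y = w.map Symbol.terminal := h.zero_inv
    rw [eq_comm, List.map_eq_append_iff] at hxy
    obtain ⟨w₁, w₂, rfl, hx, hy⟩ := hxy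
    exact ⟨w₁, w₂, 0, 0, rfl, rfl, hx ▸ DerivesIn.refl _, hy ▸ DerivesIn.refl _⟩
  | succ m ih =>
    obtain ⟨v, hp, hd⟩ := h.succ_inv
    · obtain ⟨r, hrmem, hr⟩ := hp
      obtain ⟨p, q, hpq, hv⟩ := hr.exists_parts
      rw [List.append_assoc, List.singleton_append] at hpq
      rcases append_singleton_cases hpq with ⟨q', rfl, rfl⟩ | ⟨p', rfl, rfl⟩
      · -- nonterminal inside x
        have hv' : v = (p ++ r.output ++ q') ++ y := by
          rw [hv]; simp
        rw [hv'] at hd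
        obtain ⟨w₁, w₂, n₁, n₂, rfl, hsum, h₁, h₂⟩ := ih hd
        refine ⟨w₁, w₂, n₁ + 1, n₂, rfl, by omega, ?_, h₂⟩
        refine DerivesIn.head ⟨r, hrmem, ?_⟩ h₁
        have := r.rewrites_of_exists_parts p q'
        simpa using this
      · -- nonterminal inside y
        have hv' : v = x ++ (p' ++ r.output ++ q) := by
          rw [hv]; simp
        rw [hv'] at hd
        obtain ⟨w₁, w₂, n₁, n₂, rfl, hsum, h₁, h₂⟩ := ih hd
        refine ⟨w₁, w₂, n₁, n₂ + 1, rfl, by omega, h₁, ?_⟩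
        refine DerivesIn.head ⟨r, hrmem, ?_⟩ h₂
        have := r.rewrites_of_exists_parts p' q
        simpa using this

lemma rewrites_singleton {r : ContextFreeRule T g.NT} {C : g.NT} {v : List (Symbol T g.NT)}
    (h : r.Rewrites [Symbol.nonterminal C] v) : r.input = C ∧ v = r.output := by
  cases h with
  | head s => simp
  | cons x hrs => cases hrs

end CfgSubstAux

open CfgSubstAux in
/-- Substituting all `B`-productions into the occurrence of `B` in the production
`A → α₁Bα₂` (deleting that production and adding `A → α₁βᵢα₂` for every
`B`-production `B → βᵢ`) preserves the generated language. -/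
theorem cfg_substitution_preserves_language {T N : Type} (S A B : N)
    (P P' : Finset (ContextFreeRule T N))
    (α₁ α₂ : List (Symbol T N))
    (hBA : B ≠ A)
    (hp : (⟨A, α₁ ++ Symbol.nonterminal B :: α₂⟩ : ContextFreeRule T N) ∈ P)
    (hP' : ∀ r : ContextFreeRule T N,
      r ∈ P' ↔
        (r ∈ P ∧ r ≠ ⟨A, α₁ ++ Symbol.nonterminal B :: α₂⟩) ∨
        (∃ q ∈ P, q.input = B ∧ r = ⟨A, α₁ ++ q.output ++ α₂⟩)) :
    (ContextFreeGrammar.mk N S P').language = (ContextFreeGrammar.mk N S P).language := by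
  set g : ContextFreeGrammar T := ContextFreeGrammar.mk N S P with hg
  set g' : ContextFreeGrammar T := ContextFreeGrammar.mk N S P' with hg'
  -- Easy direction: every rule of g' is simulable in g.
  have easy : ∀ u v : List (Symbol T N), g'.Derives u v → g.Derives u v := by
    have rule_ok : ∀ r ∈ P', g.Derives [Symbol.nonterminal r.input] r.output := by
      intro r hr
      rcases (hP' r).mp hr with ⟨hrP, -⟩ | ⟨q, hq, hqB, rfl⟩
      · exact (ContextFreeGrammar.Produces.single ⟨r, hrP, ContextFreeRule.Rewrites.input_output⟩)
      · refine ContextFreeGrammar.Produces.trans_derives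
          ⟨⟨A, α₁ ++ Symbol.nonterminal B :: α₂⟩, hp, ContextFreeRule.Rewrites.input_output⟩ ?_
        refine ContextFreeGrammar.Produces.single ⟨q, hq, ?_⟩
        have := q.rewrites_of_exists_parts α₁ α₂
        rw [hqB] at this
        simpa using this
    intro u v h
    induction h using Relation.ReflTransGen.head_induction_on with
    | refl => rfl
    | head hp' _ ih =>
      obtain ⟨r, hrmem, hr⟩ := hp'
      obtain ⟨p, q, rfl, rfl⟩ := hr.exists_parts
      refine ContextFreeGrammar.Derives.trans ?_ ih
      have := ((rule_ok r hrmem).append_left p).append_right q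
      simpa using this
  -- Hard direction: by strong induction on derivation length in g.
  have hard : ∀ n : ℕ, ∀ (s : List (Symbol T N)) (w : List T),
      DerivesIn g s (w.map Symbol.terminal) n → g'.Derives s (w.map Symbol.terminal) := by
    intro n
    induction n using Nat.strong_induction_on with
    | _ n ih =>
      intro s w h
      cases n with
      | zero => rw [h.zero_inv]
      | succ m =>
        obtain ⟨v, hpr, hd⟩ := h.succ_inv
        obtain ⟨r, hrmem, hr⟩ := hpr
        by_cases hrp : r = ⟨A, α₁ ++ Symbol.nonterminal B :: α₂⟩
        · -- the deleted production was used
          subst hrp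
          obtain ⟨u, v₀, hs, hv⟩ := hr.exists_parts
          have hv2 : v = (u ++ α₁) ++ ([Symbol.nonterminal B] ++ (α₂ ++ v₀)) := by
            rw [hv]; simp
          rw [hv2] at hd
          obtain ⟨w₁, w', n₁, m', rfl, hsum1, h₁, h'⟩ := hd.split
          obtain ⟨wB, w₂, k, n₂, rfl, hsum2, hB, h₂⟩ := h'.split
          -- the derivation from [nonterminal B] must start with a B-rule
          match k, hB with
          | 0, hB =>
            exfalso
            have := hB.zero_inv
            cases wB with
            | nil => simp at this
            | cons a wB' =>
              have : Symbol.nonterminal B = Symbol.terminal a := by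
                simpa using congrArg (fun l => l.head?) this
              cases this
          | k' + 1, hB =>
            obtain ⟨t, hprB, hdB⟩ := hB.succ_inv
            obtain ⟨q, hqmem, hq⟩ := hprB
            obtain ⟨hqin, rfl⟩ := rewrites_singleton hq
            -- the new rule
            have hnew : (⟨A, α₁ ++ q.output ++ α₂⟩ : ContextFreeRule T N) ∈ P' :=
              (hP' _).mpr (Or.inr ⟨q, hqmem, hqin, rfl⟩)
            have step1 : g'.Produces s (u ++ (α₁ ++ q.output ++ α₂) ++ v₀) := by
              refine ⟨⟨A, α₁ ++ q.output ++ α₂⟩, hnew, ?_⟩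
              rw [hs]
              exact ContextFreeRule.rewrites_of_exists_parts _ u v₀
            have d₁ : g'.Derives (u ++ α₁) (w₁.map Symbol.terminal) :=
              ih n₁ (by omega) _ _ h₁
            have dB : g'.Derives q.output (wB.map Symbol.terminal) :=
              ih k' (by omega) _ _ hdB
            have d₂ : g'.Derives (α₂ ++ v₀) (w₂.map Symbol.terminal) :=
              ih n₂ (by omega) _ _ h₂
            refine step1.trans_derives ?_
            have hform : u ++ (α₁ ++ q.output ++ α₂) ++ v₀
                = (u ++ α₁) ++ (q.output ++ (α₂ ++ v₀)) := by simp
            have htgt : (List.map Symbol.terminal (w₁ ++ (wB ++ w₂)) : List (Symbol T N))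
                = (List.map Symbol.terminal w₁) ++ ((List.map Symbol.terminal wB)
                    ++ (List.map Symbol.terminal w₂)) := by simp
            rw [hform, htgt]
            refine (d₁.append_right _).trans ?_
            refine ((dB.append_right _).append_left _).trans ?_
            exact (d₂.append_left _).append_left _
        · -- an untouched production was used
          have hrmem' : r ∈ P' := (hP' r).mpr (Or.inl ⟨hrmem, hrp⟩)
          exact ContextFreeGrammar.Produces.trans_derives ⟨r, hrmem', hr⟩
            (ih m (by omega) _ _ hd)
  apply Set.eq_of_subset_of_subset
  · intro w hw
    exact easy _ _ hw
  · intro w hw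
    obtain ⟨n, hn⟩ := derives_iff_derivesIn.mp hw
    exact hard n _ _ hn
end

section
/- Let G = (N, Σ, P, S) be an LL(1) context-free grammar in which every nonterminal is useful, i.e. every A ∈ N occurs in some leftmost sentential form of G and derives some terminal string. Then G contains no left recursion: there is no nonterminal A and string α ∈ (N ∪ Σ)* such that A ⇒⁺ Aα, where ⇒⁺ denotes one or more derivation steps. -/
/-- A leftmost derivation step: the leftmost nonterminal occurrence (i.e. a nonterminal
preceded only by terminals) is rewritten using a rule of the grammar. -/
def LeftmostProduces {T : Type} (g : ContextFreeGrammar T)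
    (u v : List (Symbol T g.NT)) : Prop :=
  ∃ r ∈ g.rules, ∃ (x : List T) (γ : List (Symbol T g.NT)),
    u = List.map Symbol.terminal x ++ Symbol.nonterminal r.input :: γ ∧
    v = List.map Symbol.terminal x ++ r.output ++ γ

/-- Zero or more leftmost derivation steps. -/
abbrev LeftmostDerives {T : Type} (g : ContextFreeGrammar T) :
    List (Symbol T g.NT) → List (Symbol T g.NT) → Prop :=
  Relation.ReflTransGen (LeftmostProduces g)

/-- `G` is LL(1): whenever `S ⇒*lm wAγ` and two `A`-productions `A → α`, `A → β` admit
leftmost derivations `wαγ ⇒*lm wx` and `wβγ ⇒*lm wy` with `x` and `y` both empty or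
beginning with the same terminal, the two productions coincide. -/
def IsLL1 {T : Type} (g : ContextFreeGrammar T) : Prop :=
  ∀ (w : List T) (A : g.NT) (γ : List (Symbol T g.NT))
    (r₁ r₂ : ContextFreeRule T g.NT),
    LeftmostDerives g [Symbol.nonterminal g.initial]
      (List.map Symbol.terminal w ++ Symbol.nonterminal A :: γ) →
    r₁ ∈ g.rules → r₂ ∈ g.rules → r₁.input = A → r₂.input = A →
    ∀ x y : List T,
      LeftmostDerives g (List.map Symbol.terminal w ++ r₁.output ++ γ)
        (List.map Symbol.terminal (w ++ x)) →
      LeftmostDerives g (List.map Symbol.terminal w ++ r₂.output ++ γ)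
        (List.map Symbol.terminal (w ++ y)) →
      ((x = [] ∧ y = []) ∨ ∃ (a : T) (x' y' : List T), x = a :: x' ∧ y = a :: y') →
      r₁.output = r₂.output

/-- `G` is in Greibach Normal Form: every production is of the form `A → aγ`
with `a` a terminal and `γ` a string of nonterminals. -/
def InGNF {T : Type} (g : ContextFreeGrammar T) : Prop :=
  ∀ r ∈ g.rules, ∃ (a : T) (γ : List g.NT),
    r.output = Symbol.terminal a :: List.map Symbol.nonterminal γ

namespace LL1NLR

variable {T : Type} {g : ContextFreeGrammar T}

/-- counted general derivations -/
inductive GD (g : ContextFreeGrammar T) :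
    ℕ → List (Symbol T g.NT) → List (Symbol T g.NT) → Prop
  | refl (u) : GD g 0 u u
  | step {u v w n} (h : g.Produces u v) (h' : GD g n v w) : GD g (n + 1) u w

/-- counted leftmost derivations -/
inductive LD (g : ContextFreeGrammar T) :
    ℕ → List (Symbol T g.NT) → List (Symbol T g.NT) → Prop
  | refl (u) : LD g 0 u u
  | step {u v w n} (h : LeftmostProduces g u v) (h' : LD g n v w) : LD g (n + 1) u w

/-- counted leftmost derivations in which every step rewrites the head symbol -/
inductive NPD (g : ContextFreeGrammar T) :
    ℕ → List (Symbol T g.NT) → List (Symbol T g.NT) → Prop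
  | refl (u) : NPD g 0 u u
  | step {r : ContextFreeRule T g.NT} {δ w n} (hr : r ∈ g.rules)
      (h' : NPD g n (r.output ++ δ) w) :
      NPD g (n + 1) (Symbol.nonterminal r.input :: δ) w

lemma lmp_produces {u v} (h : LeftmostProduces g u v) : g.Produces u v := by
  obtain ⟨r, hr, x, γ, rfl, rfl⟩ := h
  exact ⟨r, hr, by
    simpa using ContextFreeRule.rewrites_of_exists_parts r (List.map Symbol.terminal x) γ⟩

lemma LD.toGD {n u v} (h : LD g n u v) : GD g n u v := by
  induction h with
  | refl => exact .refl _
  | step h _ ih => exact .step (lmp_produces h) ih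

lemma LD.toLM {n u v} (h : LD g n u v) : LeftmostDerives g u v := by
  induction h with
  | refl => exact .refl
  | step h _ ih => exact Relation.ReflTransGen.head h ih

lemma lm_toLD {u v} (h : LeftmostDerives g u v) : ∃ n, LD g n u v := by
  induction h using Relation.ReflTransGen.head_induction_on with
  | refl => exact ⟨0, .refl _⟩
  | head h _ ih => obtain ⟨n, hn⟩ := ih; exact ⟨n + 1, .step h hn⟩

lemma derives_toGD {u v} (h : g.Derives u v) : ∃ n, GD g n u v := by
  induction h using Relation.ReflTransGen.head_induction_on with
  | refl => exact ⟨0, .refl _⟩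
  | head h _ ih => obtain ⟨n, hn⟩ := ih; exact ⟨n + 1, .step h hn⟩

lemma transGen_toGD {u v} (h : Relation.TransGen g.Produces u v) : ∃ n, GD g (n + 1) u v := by
  induction h using Relation.TransGen.head_induction_on with
  | single h => exact ⟨0, .step h (.refl _)⟩
  | head h _ ih => obtain ⟨n, hn⟩ := ih; exact ⟨n + 1, .step h hn⟩

lemma GD.trans {m n u v w} (h : GD g m u v) (h' : GD g n v w) : GD g (m + n) u w := by
  induction h with
  | refl => simpa using h'
  | step h1 _ ih => rw [Nat.add_right_comm]; exact .step h1 (ih h')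

lemma LD.trans {m n u v w} (h : LD g m u v) (h' : LD g n v w) : LD g (m + n) u w := by
  induction h with
  | refl => simpa using h'
  | step h1 _ ih => rw [Nat.add_right_comm]; exact .step h1 (ih h')

lemma GD.append_right {n u v} (h : GD g n u v) (p) : GD g n (u ++ p) (v ++ p) := by
  induction h with
  | refl => exact .refl _
  | step h1 _ ih => exact .step (h1.append_right p) ih

lemma GD.append_left {n u v} (h : GD g n u v) (p) : GD g n (p ++ u) (p ++ v) := by
  induction h with
  | refl => exact .refl _
  | step h1 _ ih => exact .step (h1.append_left p) ih

lemma GD.append {m n u v u' v'} (h : GD g m u v) (h' : GD g n u' v') :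
    GD g (m + n) (u ++ u') (v ++ v') :=
  (h.append_right u').trans (h'.append_left v)

lemma LD.append_right {n u v} (h : LD g n u v) (p) : LD g n (u ++ p) (v ++ p) := by
  induction h with
  | refl => exact .refl _
  | step h1 _ ih =>
    obtain ⟨r, hr, x, γ, rfl, rfl⟩ := h1
    exact .step ⟨r, hr, x, γ ++ p, by simp, by simp⟩ ih

lemma LD.prepend_terminals {n u v} (h : LD g n u v) (x : List T) :
    LD g n (List.map Symbol.terminal x ++ u) (List.map Symbol.terminal x ++ v) := by
  induction h with
  | refl => exact .refl _
  | step h1 _ ih =>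
    obtain ⟨r, hr, x', γ, rfl, rfl⟩ := h1
    exact .step ⟨r, hr, x ++ x', γ, by simp, by simp⟩ ih

lemma nt_not_mem_terminals {A : g.NT} {x : List T} :
    Symbol.nonterminal A ∉ List.map (Symbol.terminal : T → Symbol T g.NT) x := by
  simp

lemma produces_terminals_false {x : List T} {v} :
    g.Produces (List.map Symbol.terminal x) v → False := by
  rintro ⟨r, hr, hrw⟩
  obtain ⟨p, q, hu, -⟩ := hrw.exists_parts
  have : Symbol.nonterminal r.input ∈ List.map (Symbol.terminal : T → Symbol T g.NT) x := by
    rw [hu]; simp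
  simp at this

lemma GD.of_terminals {n x v} (h : GD g n (List.map Symbol.terminal x) v) :
    v = List.map Symbol.terminal x ∧ n = 0 := by
  cases h with
  | refl => exact ⟨rfl, rfl⟩
  | step h1 _ => exact absurd h1 (fun h => produces_terminals_false h)


lemma GD.cases' {n u v} (h : GD g n u v) :
    (n = 0 ∧ u = v) ∨ ∃ m w, n = m + 1 ∧ g.Produces u w ∧ GD g m w v := by
  cases h with
  | refl => exact .inl ⟨rfl, rfl⟩
  | step h1 h2 => exact .inr ⟨_, _, rfl, h1, h2⟩

lemma gd_split {n u₁ u₂ v} (h : GD g n (u₁ ++ u₂) v) :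
    ∃ v₁ v₂ n₁ n₂, n₁ + n₂ = n ∧ v = v₁ ++ v₂ ∧ GD g n₁ u₁ v₁ ∧ GD g n₂ u₂ v₂ := by
  induction n generalizing u₁ u₂ with
  | zero =>
    cases h
    exact ⟨u₁, u₂, 0, 0, rfl, rfl, .refl _, .refl _⟩
  | succ n ih =>
    obtain ⟨u, hp, hrest⟩ : ∃ u, g.Produces (u₁ ++ u₂) u ∧ GD g n u v := by
      cases h with | step h1 h2 => exact ⟨_, h1, h2⟩
    obtain ⟨r, hr, hrw⟩ := hp
    obtain ⟨p, q, hu, hm⟩ := hrw.exists_parts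
    rw [List.append_assoc] at hu
    simp only [List.singleton_append] at hu
    rcases List.append_eq_append_iff.mp hu with ⟨a', rfl, ha'⟩ | ⟨c', rfl, hc'⟩
    · -- rewrite inside u₂ : u₂ = a' ++ nt :: q
      have hstep2 : g.Produces u₂ (a' ++ r.output ++ q) := by
        refine ⟨r, hr, ?_⟩
        rw [ha']
        simpa using ContextFreeRule.rewrites_of_exists_parts r a' q
      have hm' : u = u₁ ++ (a' ++ r.output ++ q) := by
        rw [hm]; simp
      rw [hm'] at hrest
      obtain ⟨v₁, v₂, n₁, n₂, hn, rfl, h1, h2⟩ := ih hrest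
      exact ⟨v₁, v₂, n₁, n₂ + 1, by omega, rfl, h1, .step hstep2 h2⟩
    · -- u₁ = p ++ c',  nt :: q = c' ++ u₂
      cases c' with
      | nil =>
        -- u₁ = p, u₂ = nt :: q
        have hu2 : u₂ = Symbol.nonterminal r.input :: q := by simpa using hc'.symm
        have hstep2 : g.Produces u₂ (r.output ++ q) := by
          refine ⟨r, hr, ?_⟩
          rw [hu2]
          simpa using ContextFreeRule.rewrites_of_exists_parts r [] q
        have hm' : u = (p ++ []) ++ (r.output ++ q) := by rw [hm]; simp
        rw [hm'] at hrest
        obtain ⟨v₁, v₂, n₁, n₂, hn, rfl, h1, h2⟩ := ih hrest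
        exact ⟨v₁, v₂, n₁, n₂ + 1, by omega, rfl, by simpa using h1, .step hstep2 h2⟩
      | cons X c'' =>
        obtain ⟨hX, hq⟩ : Symbol.nonterminal r.input = X ∧ q = c'' ++ u₂ := by
          simpa using hc'
        have hstep1 : g.Produces (p ++ X :: c'') (p ++ r.output ++ c'') := by
          refine ⟨r, hr, ?_⟩
          rw [← hX]
          simpa using ContextFreeRule.rewrites_of_exists_parts r p c''
        have hm' : u = (p ++ r.output ++ c'') ++ u₂ := by rw [hm, hq]; simp
        rw [hm'] at hrest
        obtain ⟨v₁, v₂, n₁, n₂, hn, rfl, h1, h2⟩ := ih hrest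
        exact ⟨v₁, v₂, n₁ + 1, n₂, by omega, rfl, .step hstep1 h1, h2⟩

lemma ts_eq_append {t : List T} {v₁ v₂ : List (Symbol T g.NT)}
    (h : List.map Symbol.terminal t = v₁ ++ v₂) :
    ∃ t₁ t₂, t = t₁ ++ t₂ ∧ v₁ = List.map Symbol.terminal t₁ ∧
      v₂ = List.map Symbol.terminal t₂ := by
  obtain ⟨t₁, t₂, rfl, h1, h2⟩ := List.map_eq_append_iff.mp h
  exact ⟨t₁, t₂, rfl, h1.symm, h2.symm⟩

lemma produces_single {B : g.NT} {v} (h : g.Produces [Symbol.nonterminal B] v) :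
    ∃ r ∈ g.rules, r.input = B ∧ v = r.output := by
  obtain ⟨r, hr, hrw⟩ := h
  obtain ⟨p, q, hu, hm⟩ := hrw.exists_parts
  cases p with
  | nil =>
    have h12 : Symbol.nonterminal r.input = (Symbol.nonterminal B : Symbol T g.NT) ∧ q = [] := by
      simpa using hu.symm
    obtain ⟨h1, h2⟩ := h12
    refine ⟨r, hr, by injection h1, ?_⟩
    rw [hm, h2]; simp
  | cons a p' =>
    exfalso
    have := congrArg List.length hu
    simp at this

lemma decomp (u : List (Symbol T g.NT)) :
    (∃ x, u = List.map Symbol.terminal x) ∨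
      ∃ x B γ, u = List.map Symbol.terminal x ++ Symbol.nonterminal B :: γ := by
  induction u with
  | nil => exact .inl ⟨[], rfl⟩
  | cons s u' ih =>
    cases s with
    | terminal a =>
      rcases ih with ⟨x, rfl⟩ | ⟨x, B, γ, rfl⟩
      · exact .inl ⟨a :: x, rfl⟩
      · exact .inr ⟨a :: x, B, γ, rfl⟩
    | nonterminal B => exact .inr ⟨[], B, u', rfl⟩

/-- a general derivation to a string of terminals can be made leftmost -/
lemma conv : ∀ n, ∀ {u : List (Symbol T g.NT)} {t : List T},
    GD g n u (List.map Symbol.terminal t) → LD g n u (List.map Symbol.terminal t) := by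
  intro n
  induction n using Nat.strong_induction_on with
  | _ n ih =>
    intro u t h
    rcases decomp u with ⟨x, rfl⟩ | ⟨x, B, γ, rfl⟩
    · obtain ⟨hv, rfl⟩ := h.of_terminals
      rw [hv]
      exact .refl _
    · have h' : GD g n (List.map Symbol.terminal x ++
          ([Symbol.nonterminal B] ++ γ)) (List.map Symbol.terminal t) := by simpa using h
      obtain ⟨v₁, v₂, n₁, n₂, hn, hv, h1, h2⟩ := gd_split h'
      obtain ⟨rfl, rfl⟩ := h1.of_terminals
      obtain ⟨w₁, w₂, a, b, hab, rfl, hB, hγ⟩ := gd_split h2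
      obtain ⟨t₁, t₂, rfl, hx, hw⟩ := ts_eq_append hv
      obtain rfl : x = t₁ :=
        List.map_injective_iff.mpr (fun a b hab => Symbol.terminal.inj hab) hx
      obtain ⟨s₁, s₂, rfl, rfl, rfl⟩ := ts_eq_append hw.symm
      rcases hB.cases' with ⟨rfl, hBe⟩ | ⟨a', m, rfl, hp, hrest⟩
      · exact absurd hBe (by cases s₁ <;> simp)
      obtain ⟨r, hr, hri, rfl⟩ := produces_single hp
      have hcomb : GD g (a' + b) (r.output ++ γ)
          (List.map Symbol.terminal (s₁ ++ s₂)) := by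
        rw [List.map_append]
        exact hrest.append hγ
      have hld := ih (a' + b) (by omega) hcomb
      have hld2 := (hld.prepend_terminals x)
      have hstep : LeftmostProduces g
          (List.map Symbol.terminal x ++ Symbol.nonterminal B :: γ)
          (List.map Symbol.terminal x ++ (r.output ++ γ)) :=
        ⟨r, hr, x, γ, by rw [hri], by simp⟩
      have hfin : LD g (a' + b + 1)
          (List.map Symbol.terminal x ++ Symbol.nonterminal B :: γ)
          (List.map Symbol.terminal (x ++ (s₁ ++ s₂))) := by
        refine .step hstep ?_
        simpa using hld2
      have hcount : a' + b + 1 = n := by omega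
      rwa [hcount] at hfin

lemma LD.cases' {n u v} (h : LD g n u v) :
    (n = 0 ∧ u = v) ∨ ∃ m w, n = m + 1 ∧ LeftmostProduces g u w ∧ LD g m w v := by
  cases h with
  | refl => exact .inl ⟨rfl, rfl⟩
  | step h1 h2 => exact .inr ⟨_, _, rfl, h1, h2⟩

lemma ld_termhead : ∀ {n w v}, LD g n w v → ∀ {a : T} {u}, w = Symbol.terminal a :: u →
    ∃ v', v = Symbol.terminal a :: v' := by
  intro n w v h
  induction h with
  | refl => exact fun hw => ⟨_, hw⟩
  | step h1 _ ih =>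
    intro a u hw
    obtain ⟨r, hr, x, γ, rfl, rfl⟩ := h1
    cases x with
    | nil => simp at hw
    | cons b x' =>
      have hw' : b = a ∧ List.map Symbol.terminal x' ++ Symbol.nonterminal r.input :: γ = u := by
        simpa using hw
      obtain ⟨rfl, rfl⟩ := hw'
      exact ih (u := List.map Symbol.terminal x' ++ r.output ++ γ) (by simp)

lemma ld_to_npd_aux : ∀ {n u v}, LD g n u v → ∀ {A : g.NT} {β},
    v = Symbol.nonterminal A :: β → NPD g n u v := by
  intro n u v h
  induction h with
  | refl => exact fun _ => .refl _
  | step h1 h2 ih =>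
    intro A β hv
    subst hv
    obtain ⟨r, hr, x, γ, rfl, rfl⟩ := h1
    cases x with
    | nil =>
      have := NPD.step (g := g) hr (ih rfl)
      simpa using this
    | cons b x' =>
      obtain ⟨v', hv'⟩ := ld_termhead h2 (a := b)
        (u := List.map Symbol.terminal x' ++ r.output ++ γ) (by simp)
      simp at hv'

lemma ld_to_npd {n u} {A : g.NT} {β} (h : LD g n u (Symbol.nonterminal A :: β)) :
    NPD g n u (Symbol.nonterminal A :: β) :=
  ld_to_npd_aux h rfl

lemma npd_ld {n u v} (h : NPD g n u v) : LD g n u v := by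
  induction h with
  | refl => exact .refl _
  | @step r δ w m hr _ ih =>
    exact .step ⟨r, hr, [], δ, by simp, by simp⟩ ih

lemma NPD.append_right {n u v} (h : NPD g n u v) (p) : NPD g n (u ++ p) (v ++ p) := by
  induction h with
  | refl => exact .refl _
  | step hr h' ih =>
    rw [List.cons_append]
    exact .step hr (by simpa using ih)

/-- locate the first symbol generating the head nonterminal -/
lemma front : ∀ (u : List (Symbol T g.NT)) {n A tail},
    GD g n u (Symbol.nonterminal A :: tail) →
    ∃ pre C suf n₀ n' tail', u = pre ++ Symbol.nonterminal C :: suf ∧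
      GD g n₀ pre [] ∧ GD g n' [Symbol.nonterminal C] (Symbol.nonterminal A :: tail') ∧
      n' ≤ n := by
  intro u
  induction u with
  | nil =>
    intro n A tail h
    have h0 : GD g n (List.map (Symbol.terminal : T → Symbol T g.NT) []) _ := h
    obtain ⟨hv, -⟩ := h0.of_terminals
    simp at hv
  | cons X u' ih =>
    intro n A tail h
    have h' : GD g n ([X] ++ u') (Symbol.nonterminal A :: tail) := h
    obtain ⟨v₁, v₂, n₁, n₂, hn, hv, h1, h2⟩ := gd_split h'
    cases v₁ with
    | nil =>
      -- X derives ε, so X is a nonterminal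
      have hX : ∃ C, X = Symbol.nonterminal C := by
        cases X with
        | terminal a =>
          have h0 : GD g n₁ (List.map (Symbol.terminal : T → Symbol T g.NT) [a]) [] := h1
          obtain ⟨hv1, -⟩ := h0.of_terminals
          simp at hv1
        | nonterminal C => exact ⟨C, rfl⟩
      obtain ⟨C₀, rfl⟩ := hX
      simp only [List.nil_append] at hv
      rw [← hv] at h2
      obtain ⟨pre', C, suf, n₀', n', tail', rfl, hpre, hC, hle⟩ := ih h2
      refine ⟨Symbol.nonterminal C₀ :: pre', C, suf, n₁ + n₀', n', tail', rfl, ?_, hC, by omega⟩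
      have := h1.append hpre
      simpa using this
    | cons Y v₁' =>
      obtain ⟨rfl, hv2⟩ : Y = Symbol.nonterminal A ∧ v₁' ++ v₂ = tail := by
        simpa using hv.symm
      have hX : ∃ C, X = Symbol.nonterminal C := by
        cases X with
        | terminal a =>
          have h0 : GD g n₁ (List.map (Symbol.terminal : T → Symbol T g.NT) [a]) _ := h1
          obtain ⟨hv1, -⟩ := h0.of_terminals
          simp at hv1
        | nonterminal C => exact ⟨C, rfl⟩
      obtain ⟨C, rfl⟩ := hX
      exact ⟨[], C, u', 0, n₁, v₁', rfl, .refl _, h1, by omega⟩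

/-- a derivation A ⇒ⁿ Bα can be turned into a leftmost derivation A ⇒ᵏ Bβ, k ≥ 1 if n ≥ 1 -/
lemma lmr : ∀ n, ∀ {B A : g.NT} {tail},
    GD g n [Symbol.nonterminal B] (Symbol.nonterminal A :: tail) →
    ∃ k β, LD g k [Symbol.nonterminal B] (Symbol.nonterminal A :: β) ∧ (1 ≤ n → 1 ≤ k) := by
  intro n
  induction n using Nat.strong_induction_on with
  | _ n ih =>
    intro B A tail h
    rcases h.cases' with ⟨rfl, he⟩ | ⟨m, w, rfl, hp, hrest⟩
    · obtain ⟨rfl, rfl⟩ : B = A ∧ tail = [] := by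
        have : (Symbol.nonterminal B : Symbol T g.NT) = Symbol.nonterminal A ∧ [] = tail := by
          simpa using he
        exact ⟨by injection this.1, this.2.symm⟩
      exact ⟨0, [], .refl _, by omega⟩
    · obtain ⟨r, hr, hri, rfl⟩ := produces_single hp
      obtain ⟨pre, C, suf, n₀, n', tail', houtput, hpre, hC, hle⟩ := front r.output hrest
      obtain ⟨k', β', hld', -⟩ := ih n' (by omega) hC
      -- build the leftmost derivation
      have s0 : LD g 1 [Symbol.nonterminal B] r.output :=
        .step (w := r.output) ⟨r, hr, [], [], by simp [hri], by simp⟩ (.refl _)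
      have s1 : LD g 1 [Symbol.nonterminal B] (pre ++ Symbol.nonterminal C :: suf) :=
        houtput ▸ s0
      have hpre0 : LD g n₀ pre [] :=
        conv n₀ (t := []) (by simpa using hpre)
      have s2 : LD g n₀ (pre ++ Symbol.nonterminal C :: suf)
          (Symbol.nonterminal C :: suf) := by
        have := hpre0.append_right (Symbol.nonterminal C :: suf)
        simpa using this
      have s3 : LD g k' (Symbol.nonterminal C :: suf)
          (Symbol.nonterminal A :: (β' ++ suf)) := by
        have := hld'.append_right suf
        simpa using this
      exact ⟨1 + n₀ + k', β' ++ suf, (s1.trans s2).trans s3, fun _ => by omega⟩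

lemma lmd_append_right {u v} (h : LeftmostDerives g u v) (p) :
    LeftmostDerives g (u ++ p) (v ++ p) := by
  obtain ⟨n, hn⟩ := lm_toLD h
  exact (hn.append_right p).toLM

lemma lmd_prepend_terminals {u v} (h : LeftmostDerives g u v) (x : List T) :
    LeftmostDerives g (List.map Symbol.terminal x ++ u) (List.map Symbol.terminal x ++ v) := by
  obtain ⟨n, hn⟩ := lm_toLD h
  exact (hn.prepend_terminals x).toLM

lemma chain2 {p q : List (Symbol T g.NT)} {a b : List T}
    (hp : LeftmostDerives g p (List.map Symbol.terminal a))
    (hq : LeftmostDerives g q (List.map Symbol.terminal b)) :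
    LeftmostDerives g (p ++ q) (List.map Symbol.terminal (a ++ b)) := by
  refine (lmd_append_right hp q).trans ?_
  rw [List.map_append]
  exact lmd_prepend_terminals hq a

lemma lift_chain {p q : List (Symbol T g.NT)} {a b : List T} (w : List T)
    (hp : LeftmostDerives g p (List.map Symbol.terminal a))
    (hq : LeftmostDerives g q (List.map Symbol.terminal b)) :
    LeftmostDerives g (List.map Symbol.terminal w ++ p ++ q)
      (List.map Symbol.terminal (w ++ (a ++ b))) := by
  rw [List.append_assoc, List.map_append]
  exact lmd_prepend_terminals (chain2 hp hq) w

lemma edt (hus : ∀ B : g.NT, ∃ t, g.Derives [Symbol.nonterminal B] (List.map Symbol.terminal t)) :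
    ∀ l : List (Symbol T g.NT), ∃ t, LeftmostDerives g l (List.map Symbol.terminal t) := by
  intro l
  induction l with
  | nil => exact ⟨[], .refl⟩
  | cons s l' ih =>
    obtain ⟨t', ht'⟩ := ih
    cases s with
    | terminal a =>
      refine ⟨a :: t', ?_⟩
      have := lmd_prepend_terminals ht' [a]
      simpa using this
    | nonterminal B =>
      obtain ⟨tB, hd⟩ := hus B
      obtain ⟨n, hgd⟩ := derives_toGD hd
      have hB : LeftmostDerives g [Symbol.nonterminal B] (List.map Symbol.terminal tB) :=
        (conv n hgd).toLM
      refine ⟨tB ++ t', ?_⟩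
      have := chain2 hB ht'
      simpa using this

lemma lock (hLL1 : IsLL1 g) {A : g.NT} {β γs : List (Symbol T g.NT)}
    {w v y u : List T} {k d : ℕ}
    (hk : 1 ≤ k)
    (hvd : LeftmostDerives g [Symbol.nonterminal A] (List.map Symbol.terminal v))
    (hy : LeftmostDerives g β (List.map Symbol.terminal y))
    (hgu : LeftmostDerives g γs (List.map Symbol.terminal (y ++ u)))
    (hP : ∀ d₁, d₁ < d → ∀ v₁,
      LD g d₁ [Symbol.nonterminal A] (List.map Symbol.terminal v₁) → False) :
    ∀ k' d' μ, NPD g k' μ (Symbol.nonterminal A :: β) →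
      LD g d' μ (List.map Symbol.terminal v) →
      LeftmostDerives g [Symbol.nonterminal g.initial]
        (List.map Symbol.terminal w ++ μ ++ γs) →
      d' + k ≤ d + k' → False := by
  intro k'
  induction k' with
  | zero =>
    intro d' μ hnpd hld hreach hsync
    cases hnpd
    have hgd : GD g d' ([Symbol.nonterminal A] ++ β) (List.map Symbol.terminal v) := by
      simpa using hld.toGD
    obtain ⟨v₁, v₂, d₁, d₂, hdd, hv, h1, h2⟩ := gd_split hgd
    obtain ⟨t₁, t₂, rfl, h1', h2'⟩ := ts_eq_append hv
    rw [h1'] at h1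
    exact hP d₁ (by omega) t₁ (conv d₁ h1)
  | succ K ih =>
    intro d' μ hnpd hld hreach hsync
    cases hnpd with
    | @step r δ _ _ hr hnpd' =>
      rcases hld.cases' with ⟨rfl, he⟩ | ⟨m, mform, rfl, hlp, hrest⟩
      · cases v <;> simp at he
      · obtain ⟨s, hs, x, γ₀, hdec, rfl⟩ := hlp
        -- the leftmost nonterminal of μ is its head
        obtain ⟨hinp, rfl⟩ : Symbol.nonterminal r.input =
            (Symbol.nonterminal s.input : Symbol T g.NT) ∧ δ = γ₀ := by
          cases x with
          | nil => simpa using hdec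
          | cons b x' => simp at hdec
        have hinp' : s.input = r.input := by injection hinp.symm
        obtain rfl : x = [] := by
          cases x with
          | nil => rfl
          | cons b x' => simp at hdec
        simp only [List.map_nil, List.nil_append] at hrest
        -- reachability of the current sentential form
        have hreach' : LeftmostDerives g [Symbol.nonterminal g.initial]
            (List.map Symbol.terminal w ++ Symbol.nonterminal s.input :: (δ ++ γs)) := by
          rw [← hinp]
          simpa using hreach
        -- the two lookahead derivations
        have e1 : LeftmostDerives g (s.output ++ δ) (List.map Symbol.terminal v) :=
          hrest.toLM
        have hxd : LeftmostDerives g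
            (List.map Symbol.terminal w ++ s.output ++ (δ ++ γs))
            (List.map Symbol.terminal (w ++ (v ++ (y ++ u)))) := by
          have := lift_chain w e1 hgu
          simpa [List.append_assoc] using this
        have e2 : LeftmostDerives g (r.output ++ δ)
            (List.map Symbol.terminal (v ++ y)) := by
          refine ((npd_ld hnpd').toLM).trans ?_
          have := chain2 hvd hy
          simpa using this
        have hyd : LeftmostDerives g
            (List.map Symbol.terminal w ++ r.output ++ (δ ++ γs))
            (List.map Symbol.terminal (w ++ ((v ++ y) ++ (y ++ u)))) := by
          have := lift_chain w e2 hgu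
          simpa [List.append_assoc] using this
        -- the LL(1) condition applies
        have hcond : ((v ++ (y ++ u)) = [] ∧ ((v ++ y) ++ (y ++ u)) = []) ∨
            ∃ (a : T) (x' y' : List T), (v ++ (y ++ u)) = a :: x' ∧
              ((v ++ y) ++ (y ++ u)) = a :: y' := by
          rcases v with _ | ⟨a, v'⟩
          · rcases y with _ | ⟨a, y'⟩
            · rcases u with _ | ⟨a, u'⟩
              · exact .inl ⟨rfl, rfl⟩
              · exact .inr ⟨a, u', u', by simp, by simp⟩
            · exact .inr ⟨a, y' ++ u, y' ++ (a :: y' ++ u), by simp, by simp⟩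
          · exact .inr ⟨a, v' ++ (y ++ u), (v' ++ y) ++ (y ++ u), by simp, by simp⟩
        have hout : s.output = r.output :=
          hLL1 w s.input (δ ++ γs) s r hreach' hs hr rfl hinp'.symm _ _ hxd hyd hcond
        -- recurse
        rw [hout] at hrest
        have hstep : LeftmostProduces g
            (List.map Symbol.terminal w ++ (Symbol.nonterminal r.input :: δ) ++ γs)
            (List.map Symbol.terminal w ++ (r.output ++ δ) ++ γs) :=
          ⟨r, hr, w, δ ++ γs, by simp, by simp⟩
        have hreach2 : LeftmostDerives g [Symbol.nonterminal g.initial]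
            (List.map Symbol.terminal w ++ (r.output ++ δ) ++ γs) :=
          hreach.tail hstep
        exact ih m (r.output ++ δ) hnpd' hrest hreach2 (by omega)

end LL1NLR

/-- An LL(1) grammar in which every nonterminal is useful (occurs in some leftmost
sentential form and derives some terminal string) contains no left recursion:
no nonterminal `A` satisfies `A ⇒⁺ Aα`. -/
theorem ll1_no_left_recursion {T : Type} (g : ContextFreeGrammar T)
    (hLL1 : IsLL1 g)
    (huseful : ∀ A : g.NT,
      (∃ δ : List (Symbol T g.NT),
        LeftmostDerives g [Symbol.nonterminal g.initial] δ ∧ Symbol.nonterminal A ∈ δ) ∧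
      (∃ w : List T, g.Derives [Symbol.nonterminal A] (List.map Symbol.terminal w))) :
    ¬ ∃ (A : g.NT) (α : List (Symbol T g.NT)),
        Relation.TransGen g.Produces [Symbol.nonterminal A]
          (Symbol.nonterminal A :: α) := by
  open LL1NLR in
  rintro ⟨A, α₀, htg⟩
  obtain ⟨n, hgd⟩ := LL1NLR.transGen_toGD htg
  obtain ⟨k, β, hldloop, hk1⟩ := LL1NLR.lmr (n + 1) hgd
  have hk : 1 ≤ k := hk1 (by omega)
  have hnpd : LL1NLR.NPD g k [Symbol.nonterminal A] (Symbol.nonterminal A :: β) :=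
    LL1NLR.ld_to_npd hldloop
  obtain ⟨δ, hreachδ, hmem⟩ := (huseful A).1
  obtain ⟨δ₁, δ₂, rfl⟩ := List.append_of_mem hmem
  have hus2 : ∀ B : g.NT, ∃ t, g.Derives [Symbol.nonterminal B] (List.map Symbol.terminal t) :=
    fun B => (huseful B).2
  obtain ⟨w, hw⟩ := LL1NLR.edt hus2 δ₁
  have hreach1 : LeftmostDerives g [Symbol.nonterminal g.initial]
      (List.map Symbol.terminal w ++ Symbol.nonterminal A :: δ₂) :=
    hreachδ.trans (LL1NLR.lmd_append_right hw (Symbol.nonterminal A :: δ₂))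
  have hloopLM : LeftmostDerives g [Symbol.nonterminal A] (Symbol.nonterminal A :: β) :=
    (LL1NLR.npd_ld hnpd).toLM
  have hreach2 : LeftmostDerives g [Symbol.nonterminal g.initial]
      (List.map Symbol.terminal w ++ Symbol.nonterminal A :: (β ++ δ₂)) := by
    refine hreach1.trans ?_
    have h1 := LL1NLR.lmd_append_right hloopLM δ₂
    have h2 := LL1NLR.lmd_prepend_terminals h1 w
    simpa using h2
  obtain ⟨y, hy⟩ := LL1NLR.edt hus2 β
  obtain ⟨u, hu⟩ := LL1NLR.edt hus2 δ₂
  have hgu : LeftmostDerives g (β ++ δ₂) (List.map Symbol.terminal (y ++ u)) :=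
    LL1NLR.chain2 hy hu
  obtain ⟨v₀, hv₀⟩ := (huseful A).2
  obtain ⟨n₀, hgd₀⟩ := LL1NLR.derives_toGD hv₀
  have hld₀ := LL1NLR.conv n₀ hgd₀
  have main : ∀ d (v : List T),
      LL1NLR.LD g d [Symbol.nonterminal A] (List.map Symbol.terminal v) → False := by
    intro d
    induction d using Nat.strong_induction_on with
    | _ d ih =>
      intro v hldv
      refine LL1NLR.lock (w := w) hLL1 hk hldv.toLM hy hgu
        (fun d₁ hlt v₁ h' => ih d₁ hlt v₁ h') k d [Symbol.nonterminal A] hnpd hldv ?_ (by omega)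
      simpa using hreach2
  exact main n₀ v₀ hld₀
end
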